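/- ΛΓ ≃ Λ and ΓΛ ≃ Γ (Theorem 2.5(3) of the paper, second half, stated objectwise): let X be an object of C with a torsion decomposition ΓX → X → LX → ΓX⟦1⟧ and a completion decomposition ΔX → X → ΛX → ΔX⟦1⟧. (i) Given a completion decomposition Δ' → ΓX → Λ' → Δ'⟦1⟧ of ΓX, there is a unique morphism Λ' → ΛX whose precomposition with ΓX → Λ' equals the composite ΓX → X → ΛX, and this morphism is an isomorphism. (ii) Given a torsion decomposition Γ'' → ΛX → L'' → Γ''⟦1⟧ of ΛX, there is a unique morphism ΓX → Γ'' whose postcomposition with Γ'' → ΛX equals the composite ΓX → X → ΛX, and this morphism is an isomorphism. -/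

import Mathlib

open CategoryTheory CategoryTheory.Limits CategoryTheory.Pretriangulated

universe v u

variable {C : Type u} [Category.{v} C] [HasZeroObject C] [HasShift C ℤ]
  [Preadditive C] [∀ n : ℤ, (shiftFunctor C n).Additive] [Pretriangulated C]

/-- The orthogonal `T^⊥` of a class of objects `T`: all objects `Y` such that every
morphism `X⟦n⟧ ⟶ Y` with `X ∈ T` is zero. -/
def orth (T : Set C) : Set C :=
  {Y | ∀ X ∈ T, ∀ n : ℤ, ∀ f : X⟦n⟧ ⟶ Y, f = 0}


set_option linter.unusedSectionVars false in
lemma hom_orth_zero {S : Set C} {A B : C} (hA : A ∈ S) (hB : B ∈ orth S) (f : A ⟶ B) : f = 0 := by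
  have h0 : (shiftFunctorZero C ℤ).hom.app A ≫ f = 0 := hB A hA 0 _
  exact (cancel_epi ((shiftFunctorZero C ℤ).hom.app A)).1 (by rw [h0, comp_zero])

set_option linter.unusedSectionVars false in
lemma hom_orth_shift_zero {S : Set C} {A B : C} (hA : A ∈ S) (hB : B ∈ orth S) (n : ℤ)
    (f : A ⟶ B⟦n⟧) : f = 0 := by
  have h0 : (shiftFunctor C (-n)).map f ≫
      (shiftFunctorCompIsoId C n (-n) (by omega)).hom.app B = 0 := hB A hA (-n) _
  have h1 : (shiftFunctor C (-n)).map f = 0 :=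
    (cancel_mono ((shiftFunctorCompIsoId C n (-n) (by omega)).hom.app B)).1
      (by rw [h0, zero_comp])
  exact (shiftFunctor C (-n)).map_injective (by rw [h1, Functor.map_zero])

/-- A triangulated subcategory of `C`, given as a class of objects containing the zero
objects, closed under isomorphism, shifts, and extensions. -/
structure TriangulatedSub (C : Type u) [Category.{v} C] [HasZeroObject C] [HasShift C ℤ]
    [Preadditive C] [∀ n : ℤ, (shiftFunctor C n).Additive] [Pretriangulated C] where
  P : Set C
  zero_mem : ∀ X : C, IsZero X → X ∈ P
  iso_closed : ∀ ⦃X Y : C⦄, (X ≅ Y) → X ∈ P → Y ∈ P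
  shift_closed : ∀ (X : C) (n : ℤ), X ∈ P → X⟦n⟧ ∈ P
  ext_closed : ∀ (Tr : Triangle C), (Tr ∈ distTriang C) → Tr.obj₁ ∈ P → Tr.obj₃ ∈ P → Tr.obj₂ ∈ P

/-- `ΛΓ ≃ Λ` and `ΓΛ ≃ Γ` (objectwise): given torsion and completion decompositions of `X`,
(i) the completion `Λ'` of `ΓX` maps uniquely and isomorphically to `ΛX` compatibly with
the composite `ΓX ⟶ X ⟶ ΛX`; (ii) `ΓX` maps uniquely and isomorphically to the torsion
part `Γ''` of `ΛX` compatibly with the same composite. -/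
theorem lambda_gamma_iso (T : TriangulatedSub C) (X : C)
    (ΓX LX : C) (a : ΓX ⟶ X) (b : X ⟶ LX) (c : LX ⟶ ΓX⟦(1 : ℤ)⟧)
    (hXdt : Triangle.mk a b c ∈ distTriang C) (hΓ : ΓX ∈ T.P) (hL : LX ∈ orth T.P)
    (ΔX ΛX : C) (d : ΔX ⟶ X) (e : X ⟶ ΛX) (f : ΛX ⟶ ΔX⟦(1 : ℤ)⟧)
    (hXdt' : Triangle.mk d e f ∈ distTriang C) (hΔ : ΔX ∈ orth T.P)
    (hΛ : ΛX ∈ orth (orth T.P))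
    -- (i): a completion decomposition of `ΓX`
    (Δ' Λ' : C) (d' : Δ' ⟶ ΓX) (e' : ΓX ⟶ Λ') (f' : Λ' ⟶ Δ'⟦(1 : ℤ)⟧)
    (hΓdt : Triangle.mk d' e' f' ∈ distTriang C) (hΔ' : Δ' ∈ orth T.P)
    (hΛ' : Λ' ∈ orth (orth T.P))
    -- (ii): a torsion decomposition of `ΛX`
    (Γ'' L'' : C) (g : Γ'' ⟶ ΛX) (h : ΛX ⟶ L'') (k : L'' ⟶ Γ''⟦(1 : ℤ)⟧)
    (hΛdt : Triangle.mk g h k ∈ distTriang C) (hΓ'' : Γ'' ∈ T.P) (hL'' : L'' ∈ orth T.P) :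
    ((∃! m : Λ' ⟶ ΛX, e' ≫ m = a ≫ e) ∧ (∀ m : Λ' ⟶ ΛX, e' ≫ m = a ≫ e → IsIso m)) ∧
    ((∃! m' : ΓX ⟶ Γ'', m' ≫ g = a ≫ e) ∧ (∀ m' : ΓX ⟶ Γ'', m' ≫ g = a ≫ e → IsIso m')) := by

  -- uniqueness of maps Λ' ⟶ ΛX and Λ' ⟶ Λ' determined by precomposition with e'
  have uniqΛX : ∀ (W : C), W ∈ orth (orth T.P) → ∀ u v : Λ' ⟶ W, e' ≫ u = e' ≫ v → u = v := by
    intro W hW u v huv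
    have h0 : e' ≫ (u - v) = 0 := by rw [Preadditive.comp_sub, huv, sub_self]
    obtain ⟨w, hw⟩ := Triangle.yoneda_exact₃ _ hΓdt (u - v) h0
    have hw0 : w = 0 := hW Δ' hΔ' 1 w
    rw [hw0, comp_zero] at hw
    exact sub_eq_zero.1 hw
  -- uniqueness of maps ΛX ⟶ W determined by precomposition with e
  have uniqΛ : ∀ (W : C), W ∈ orth (orth T.P) → ∀ u v : ΛX ⟶ W, e ≫ u = e ≫ v → u = v := by
    intro W hW u v huv
    have h0 : e ≫ (u - v) = 0 := by rw [Preadditive.comp_sub, huv, sub_self]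
    obtain ⟨w, hw⟩ := Triangle.yoneda_exact₃ _ hXdt' (u - v) h0
    have hw0 : w = 0 := hW ΔX hΔ 1 w
    rw [hw0, comp_zero] at hw
    exact sub_eq_zero.1 hw
  -- existence of m : Λ' ⟶ ΛX
  have hd'ae : d' ≫ (a ≫ e) = 0 := hom_orth_zero hΔ' hΛ _
  obtain ⟨m₀, hm₀⟩ : ∃ m₀ : Λ' ⟶ ΛX, a ≫ e = e' ≫ m₀ := Triangle.yoneda_exact₂ _ hΓdt (a ≫ e) hd'ae
  -- existence of p : X ⟶ Λ' with a ≫ p = e'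
  have hinvX := inv_rot_of_distTriang _ hXdt
  have hLe' : (Triangle.mk a b c).invRotate.mor₁ ≫ e' = 0 := hΛ' LX hL (-1) _
  obtain ⟨p, hp⟩ : ∃ p : X ⟶ Λ', e' = a ≫ p := Triangle.yoneda_exact₂ _ hinvX e' hLe'
  -- existence of n : ΛX ⟶ Λ' with e ≫ n = p
  have hdp : d ≫ p = 0 := hom_orth_zero hΔ hΛ' _
  obtain ⟨n, hn⟩ : ∃ n : ΛX ⟶ Λ', p = e ≫ n := Triangle.yoneda_exact₂ _ hXdt' p hdp
  -- given any m with e' ≫ m = a ≫ e, it is an isomorphism with inverse n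
  have isoM : ∀ m : Λ' ⟶ ΛX, e' ≫ m = a ≫ e → IsIso m := by
    intro m hm
    have hmn : m ≫ n = 𝟙 Λ' := by
      apply uniqΛX Λ' hΛ'
      rw [← Category.assoc, hm, Category.assoc, ← hn, ← hp, Category.comp_id]
    have hpm : p ≫ m = e := by
      have h1 : a ≫ (p ≫ m - e) = 0 := by
        rw [Preadditive.comp_sub, ← Category.assoc, ← hp, hm, sub_self]
      obtain ⟨w, hw⟩ := Triangle.yoneda_exact₂ _ hXdt (p ≫ m - e) h1
      have hw0 : w = 0 := hom_orth_zero hL hΛ w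
      rw [hw0, comp_zero] at hw
      exact sub_eq_zero.1 hw
    have hnm : n ≫ m = 𝟙 ΛX := by
      apply uniqΛ ΛX hΛ
      rw [← Category.assoc, ← hn, hpm, Category.comp_id]
    exact ⟨n, hmn, hnm⟩
  -- part (ii): uniqueness of maps into Γ'' determined by postcomposition with g
  have uniqΓ'' : ∀ (W : C), W ∈ T.P → ∀ u v : W ⟶ Γ'', u ≫ g = v ≫ g → u = v := by
    intro W hW u v huv
    have h0 : (u - v) ≫ (Triangle.mk g h k).invRotate.mor₂ = 0 := by
      change (u - v) ≫ g = 0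
      rw [Preadditive.sub_comp, huv, sub_self]
    obtain ⟨w, hw⟩ := Triangle.coyoneda_exact₂ _ (inv_rot_of_distTriang _ hΛdt) (u - v) h0
    have hw0 : w = 0 := hom_orth_shift_zero hW hL'' (-1) w
    rw [hw0, zero_comp] at hw
    exact sub_eq_zero.1 hw
  -- uniqueness of maps W ⟶ ΓX determined by postcomposition with a, for W ∈ T.P
  have uniqΓX : ∀ (W : C), W ∈ T.P → ∀ u v : W ⟶ ΓX, u ≫ a = v ≫ a → u = v := by
    intro W hW u v huv
    have h0 : (u - v) ≫ (Triangle.mk a b c).invRotate.mor₂ = 0 := by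
      change (u - v) ≫ a = 0
      rw [Preadditive.sub_comp, huv, sub_self]
    obtain ⟨w, hw⟩ := Triangle.coyoneda_exact₂ _ (inv_rot_of_distTriang _ hXdt) (u - v) h0
    have hw0 : w = 0 := hom_orth_shift_zero hW hL (-1) w
    rw [hw0, zero_comp] at hw
    exact sub_eq_zero.1 hw
  -- existence of m' : ΓX ⟶ Γ''
  have haeh : (a ≫ e) ≫ h = 0 := by
    rw [Category.assoc]
    exact hom_orth_zero hΓ hL'' _
  obtain ⟨m'₀, hm'₀⟩ : ∃ m'₀ : ΓX ⟶ Γ'', a ≫ e = m'₀ ≫ g := Triangle.coyoneda_exact₂ _ hΛdt (a ≫ e) haeh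
  -- existence of q : Γ'' ⟶ X with q ≫ e = g
  have hgf : g ≫ f = 0 := hom_orth_shift_zero hΓ'' hΔ 1 _
  obtain ⟨q, hq⟩ : ∃ q : Γ'' ⟶ X, g = q ≫ e := Triangle.coyoneda_exact₃ _ hXdt' g hgf
  -- existence of n' : Γ'' ⟶ ΓX with n' ≫ a = q
  have hqb : q ≫ b = 0 := hom_orth_zero hΓ'' hL _
  obtain ⟨n', hn'⟩ : ∃ n' : Γ'' ⟶ ΓX, q = n' ≫ a := Triangle.coyoneda_exact₂ _ hXdt q hqb
  have isoM' : ∀ m' : ΓX ⟶ Γ'', m' ≫ g = a ≫ e → IsIso m' := by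
    intro m' hm'
    have hn'm' : n' ≫ m' = 𝟙 Γ'' := by
      apply uniqΓ'' Γ'' hΓ''
      rw [Category.assoc, hm', ← Category.assoc, ← hn', ← hq, Category.id_comp]
    have hm'q : m' ≫ q = a := by
      have h1 : (m' ≫ q - a) ≫ e = 0 := by
        rw [Preadditive.sub_comp, Category.assoc, ← hq, hm', sub_self]
      obtain ⟨w, hw⟩ := Triangle.coyoneda_exact₂ _ hXdt' (m' ≫ q - a) h1
      have hw0 : w = 0 := hom_orth_zero hΓ hΔ w
      rw [hw0, zero_comp] at hw
      exact sub_eq_zero.1 hw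
    have hm'n' : m' ≫ n' = 𝟙 ΓX := by
      apply uniqΓX ΓX hΓ
      rw [Category.assoc, ← hn', hm'q, Category.id_comp]
    exact ⟨n', hm'n', hn'm'⟩
  refine ⟨⟨⟨m₀, hm₀.symm, fun m hm => uniqΛX ΛX hΛ m m₀ (by rw [hm, hm₀])⟩, isoM⟩,
    ⟨⟨m'₀, hm'₀.symm, fun m' hm' => uniqΓ'' ΓX hΓ m' m'₀ (by rw [hm', hm'₀])⟩, isoM'⟩⟩
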